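/- Let L be a finite semidistributive lattice. Then the map κ is a bijection from the set of join-irreducible elements of L to the set of meet-irreducible elements of L, and a finite set F of join-irreducible elements is a face of the canonical join complex of L if and only if {κ(j) : j ∈ F} is a face of the canonical meet complex of L. In particular, κ induces an isomorphism from the canonical join complex to the canonical meet complex. -/

import Mathlib

universe u v

def JoinSemidistrib (α : Type*) [Lattice α] : Prop :=
  ∀ x y z : α, x ⊔ y = x ⊔ z → x ⊔ (y ⊓ z) = x ⊔ y

def MeetSemidistrib (α : Type*) [Lattice α] : Prop :=
  ∀ x y z : α, x ⊓ y = x ⊓ z → x ⊓ (y ⊔ z) = x ⊓ y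

section JoinDefs

variable {α : Type*} [Lattice α] [OrderBot α]

/-- `j` is join-irreducible: not the bottom element, and `j = a ⊔ b` implies `j = a` or `j = b`. -/
def JoinIrred (j : α) : Prop :=
  j ≠ ⊥ ∧ ∀ a b : α, j = a ⊔ b → j = a ∨ j = b

/-- `A` join-refines `B`: every element of `A` is below some element of `B`. -/
def JoinRefines (A B : Finset α) : Prop :=
  ∀ a ∈ A, ∃ b ∈ B, a ≤ b

/-- `A` is an irredundant join representation of `w`. -/
def IrredJoinRep (A : Finset α) (w : α) : Prop :=
  A.sup id = w ∧ ∀ A' ⊂ A, A'.sup id < w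

/-- `A` is the canonical join representation of `w`: the irredundant join representation
of `w` that join-refines every irredundant join representation of `w`. -/
def CanonicalJoinRep (A : Finset α) (w : α) : Prop :=
  IrredJoinRep A w ∧ ∀ B : Finset α, IrredJoinRep B w → JoinRefines A B

/-- `A` joins canonically, i.e. `A` is a face of the canonical join complex. -/
def JoinsCanonically (A : Finset α) : Prop :=
  CanonicalJoinRep A (A.sup id)

/-- `j` is a canonical joinand of `w`. -/
def CanonicalJoinand (j w : α) : Prop :=
  ∃ A : Finset α, CanonicalJoinRep A w ∧ j ∈ A

end JoinDefs

/-- The canonical join complex is flag: any finite set of join-irreducible elements all of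
whose two-element subsets are faces is itself a face. -/
def FlagCanonicalJoinComplex (α : Type*) [Lattice α] [OrderBot α] [DecidableEq α] : Prop :=
  ∀ F : Finset α, (∀ j ∈ F, JoinIrred j) →
    (∀ j ∈ F, ∀ j' ∈ F, j ≠ j' → JoinsCanonically ({j, j'} : Finset α)) →
    JoinsCanonically F

/-- A lattice is crosscut-simplicial if for every `x ≤ y` and every proper subset `S` of the
set of atoms of the interval `[x, y]` (elements `a` with `x ⋖ a` and `a ≤ y`), the join of `x`
with all elements of `S` is strictly less than `y`. -/
def CrosscutSimplicial (β : Type*) [Lattice β] : Prop :=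
  ∀ x y : β, x ≤ y → ∀ S : Finset β,
    (∀ a ∈ S, x ⋖ a ∧ a ≤ y) →
    (∃ a : β, (x ⋖ a ∧ a ≤ y) ∧ a ∉ S) →
    S.fold (· ⊔ · : β → β → β) x id < y

section MeetDefs

variable {α : Type*} [Lattice α] [OrderTop α]

/-- `m` is meet-irreducible: not the top element, and `m = a ⊓ b` implies `m = a` or `m = b`. -/
def MeetIrred (m : α) : Prop :=
  m ≠ ⊤ ∧ ∀ a b : α, m = a ⊓ b → m = a ∨ m = b

/-- `A` meet-refines `B`: every element of `A` is above some element of `B`. -/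
def MeetRefines (A B : Finset α) : Prop :=
  ∀ a ∈ A, ∃ b ∈ B, b ≤ a

/-- `A` is an irredundant meet representation of `w`. -/
def IrredMeetRep (A : Finset α) (w : α) : Prop :=
  A.inf id = w ∧ ∀ A' ⊂ A, w < A'.inf id

/-- `A` is the canonical meet representation of `w`. -/
def CanonicalMeetRep (A : Finset α) (w : α) : Prop :=
  IrredMeetRep A w ∧ ∀ B : Finset α, IrredMeetRep B w → MeetRefines A B

/-- `A` meets canonically, i.e. `A` is a face of the canonical meet complex. -/
def MeetsCanonically (A : Finset α) : Prop :=
  CanonicalMeetRep A (A.inf id)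

end MeetDefs

/-- The canonical meet complex is flag. -/
def FlagCanonicalMeetComplex (α : Type*) [Lattice α] [OrderTop α] [DecidableEq α] : Prop :=
  ∀ F : Finset α, (∀ m ∈ F, MeetIrred m) →
    (∀ m ∈ F, ∀ m' ∈ F, m ≠ m' → MeetsCanonically ({m, m'} : Finset α)) →
    MeetsCanonically F


set_option linter.unusedSectionVars false

namespace SDProof

open Finset Classical

variable {α : Type u} [Lattice α] [BoundedOrder α] [Fintype α] [DecidableEq α]

/-! ### Definitions -/

open Classical in
noncomputable def jstarF {β : Type v} [Lattice β] [BoundedOrder β] [Fintype β] (j : β) : β :=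
  (Finset.univ.filter (fun x => x < j)).sup id

open Classical in
noncomputable def kapF {β : Type v} [Lattice β] [BoundedOrder β] [Fintype β] (j : β) : β :=
  (Finset.univ.filter (fun a => jstarF j ≤ a ∧ ¬ j ≤ a)).sup id

noncomputable def etaF {β : Type v} [Lattice β] [BoundedOrder β] [Fintype β] [DecidableEq β]
    (y w : β) : β :=
  (Finset.univ.filter (fun x => x ⊔ y = w)).inf id

open Classical in
noncomputable def CJsetF {β : Type v} [Lattice β] [BoundedOrder β] [Fintype β] [DecidableEq β]
    (w : β) : Finset β :=
  (Finset.univ.filter (fun y => y ⋖ w)).image (fun y => etaF y w)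

open Classical in
noncomputable def mstarF {β : Type v} [Lattice β] [BoundedOrder β] [Fintype β] (m : β) : β :=
  (Finset.univ.filter (fun x => m < x)).inf id

open Classical in
noncomputable def kapdF {β : Type v} [Lattice β] [BoundedOrder β] [Fintype β] (m : β) : β :=
  (Finset.univ.filter (fun a => a ≤ mstarF m ∧ ¬ a ≤ m)).inf id

noncomputable def thetaF {β : Type v} [Lattice β] [BoundedOrder β] [Fintype β] [DecidableEq β]
    (z v : β) : β :=
  (Finset.univ.filter (fun x => x ⊓ z = v)).sup id

open Classical in
noncomputable def CMsetF {β : Type v} [Lattice β] [BoundedOrder β] [Fintype β] [DecidableEq β]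
    (v : β) : Finset β :=
  (Finset.univ.filter (fun z => v ⋖ z)).image (fun z => thetaF z v)

/-! ### jstar / mstar -/

lemma joinIrred_of_sup {j : α} (hj : JoinIrred j) :
    ∀ A : Finset α, A.sup id = j → ∃ a ∈ A, a = j := by
  intro A
  induction A using Finset.induction_on with
  | empty => intro h; rw [Finset.sup_empty] at h; exact absurd h.symm hj.1
  | insert _ _ ha ih =>
    intro h
    rw [Finset.sup_insert] at h
    rcases hj.2 _ _ h.symm with h1 | h2
    · exact ⟨_, Finset.mem_insert_self _ _, h1.symm⟩
    · obtain ⟨b, hb, hbe⟩ := ih h2.symm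
      exact ⟨b, Finset.mem_insert_of_mem hb, hbe⟩

lemma meetIrred_of_inf {m : α} (hm : MeetIrred m) :
    ∀ A : Finset α, A.inf id = m → ∃ a ∈ A, a = m := by
  intro A
  induction A using Finset.induction_on with
  | empty => intro h; rw [Finset.inf_empty] at h; exact absurd h.symm hm.1
  | insert _ _ ha ih =>
    intro h
    rw [Finset.inf_insert] at h
    rcases hm.2 _ _ h.symm with h1 | h2
    · exact ⟨_, Finset.mem_insert_self _ _, h1.symm⟩
    · obtain ⟨b, hb, hbe⟩ := ih h2.symm
      exact ⟨b, Finset.mem_insert_of_mem hb, hbe⟩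

lemma le_jstarF {x j : α} (h : x < j) : x ≤ jstarF j :=
  Finset.le_sup (f := id) (Finset.mem_filter.mpr ⟨Finset.mem_univ _, h⟩)

lemma mstarF_le {x m : α} (h : m < x) : mstarF m ≤ x :=
  Finset.inf_le (f := id) (Finset.mem_filter.mpr ⟨Finset.mem_univ _, h⟩)

lemma jstarF_lt {j : α} (hj : JoinIrred j) : jstarF j < j := by
  have hle : jstarF j ≤ j :=
    Finset.sup_le (fun b hb => le_of_lt (Finset.mem_filter.mp hb).2)
  rcases hle.lt_or_eq with h | h
  · exact h
  · obtain ⟨a, ha, hae⟩ := joinIrred_of_sup hj _ h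
    exact absurd (hae ▸ (Finset.mem_filter.mp ha).2) (lt_irrefl j)

lemma lt_mstarF {m : α} (hm : MeetIrred m) : m < mstarF m := by
  have hle : m ≤ mstarF m :=
    Finset.le_inf (fun b hb => le_of_lt (Finset.mem_filter.mp hb).2)
  rcases hle.lt_or_eq with h | h
  · exact h
  · obtain ⟨a, ha, hae⟩ := meetIrred_of_inf hm _ h.symm
    exact absurd (hae ▸ (Finset.mem_filter.mp ha).2) (lt_irrefl m)

lemma covby_jstarF {j y : α} (hj : JoinIrred j) (h : y ⋖ j) : y = jstarF j := by
  rcases (le_jstarF h.1).lt_or_eq with hlt | heq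
  · exact absurd (jstarF_lt hj) (h.2 hlt)
  · exact heq

/-! ### kap -/

lemma mem_le_kapF {j a : α} (h1 : jstarF j ≤ a) (h2 : ¬ j ≤ a) : a ≤ kapF j :=
  Finset.le_sup (f := id) (Finset.mem_filter.mpr ⟨Finset.mem_univ _, h1, h2⟩)

lemma kapdF_le_mem {m a : α} (h1 : a ≤ mstarF m) (h2 : ¬ a ≤ m) : kapdF m ≤ a :=
  Finset.inf_le (f := id) (Finset.mem_filter.mpr ⟨Finset.mem_univ _, h1, h2⟩)

lemma kapF_spec {j : α} (hM : MeetSemidistrib α) (hj : JoinIrred j) :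
    jstarF j ≤ kapF j ∧ ¬ j ≤ kapF j := by
  have hK : ∀ a : α, jstarF j ≤ a → ¬ j ≤ a → j ⊓ a = jstarF j := by
    intro a h1 h2
    refine le_antisymm (le_jstarF (lt_of_le_of_ne inf_le_left fun h => h2 ?_))
      (le_inf (jstarF_lt hj).le h1)
    rw [← h]; exact inf_le_right
  have hclosed : ∀ x ∈ {a : α | jstarF j ≤ a ∧ ¬ j ≤ a},
      ∀ y ∈ {a : α | jstarF j ≤ a ∧ ¬ j ≤ a}, x ⊔ y ∈ {a : α | jstarF j ≤ a ∧ ¬ j ≤ a} := by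
    intro a ha b hb
    have h3 : j ⊓ (a ⊔ b) = jstarF j := by
      rw [hM j a b ((hK a ha.1 ha.2).trans (hK b hb.1 hb.2).symm)]
      exact hK a ha.1 ha.2
    refine ⟨le_trans ha.1 le_sup_left, fun hle => ?_⟩
    rw [inf_eq_left.mpr hle] at h3
    exact (jstarF_lt hj).ne h3.symm
  have hne : (Finset.univ.filter (fun a : α => jstarF j ≤ a ∧ ¬ j ≤ a)).Nonempty :=
    ⟨jstarF j, Finset.mem_filter.mpr ⟨Finset.mem_univ _, le_rfl, (jstarF_lt hj).not_ge⟩⟩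
  have : kapF j ∈ {a : α | jstarF j ≤ a ∧ ¬ j ≤ a} := by
    rw [kapF, ← Finset.sup'_eq_sup hne]
    exact Finset.sup'_mem _ hclosed _ hne id (fun a ha => (Finset.mem_filter.mp ha).2)
  exact this

lemma kapdF_spec {m : α} (hJ : JoinSemidistrib α) (hm : MeetIrred m) :
    kapdF m ≤ mstarF m ∧ ¬ kapdF m ≤ m := by
  have hK : ∀ a : α, a ≤ mstarF m → ¬ a ≤ m → m ⊔ a = mstarF m := by
    intro a h1 h2
    refine le_antisymm (sup_le (lt_mstarF hm).le h1)
      (mstarF_le (lt_of_le_of_ne le_sup_left fun h => h2 ?_))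
    rw [h]; exact le_sup_right
  have hclosed : ∀ x ∈ {a : α | a ≤ mstarF m ∧ ¬ a ≤ m},
      ∀ y ∈ {a : α | a ≤ mstarF m ∧ ¬ a ≤ m}, x ⊓ y ∈ {a : α | a ≤ mstarF m ∧ ¬ a ≤ m} := by
    intro a ha b hb
    have h3 : m ⊔ (a ⊓ b) = mstarF m := by
      rw [hJ m a b ((hK a ha.1 ha.2).trans (hK b hb.1 hb.2).symm)]
      exact hK a ha.1 ha.2
    refine ⟨le_trans inf_le_left ha.1, fun hle => ?_⟩
    rw [sup_eq_left.mpr hle] at h3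
    exact (lt_mstarF hm).ne h3
  have hne : (Finset.univ.filter (fun a : α => a ≤ mstarF m ∧ ¬ a ≤ m)).Nonempty :=
    ⟨mstarF m, Finset.mem_filter.mpr ⟨Finset.mem_univ _, le_rfl, (lt_mstarF hm).not_ge⟩⟩
  have : kapdF m ∈ {a : α | a ≤ mstarF m ∧ ¬ a ≤ m} := by
    rw [kapdF, ← Finset.inf'_eq_inf hne]
    exact Finset.inf'_mem _ hclosed _ hne id (fun a ha => (Finset.mem_filter.mp ha).2)
  exact this

lemma kapF_isGreatest {j : α} (hM : MeetSemidistrib α) (hj : JoinIrred j) :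
    IsGreatest {a : α | jstarF j ≤ a ∧ ¬ j ≤ a} (kapF j) :=
  ⟨kapF_spec hM hj, fun _ ha => mem_le_kapF ha.1 ha.2⟩

lemma kapF_meetIrred {j : α} (hM : MeetSemidistrib α) (hj : JoinIrred j) :
    MeetIrred (kapF j) := by
  obtain ⟨h1, h2⟩ := kapF_spec hM hj
  refine ⟨fun htop => h2 (le_top.trans htop.ge), fun a b hab => ?_⟩
  by_contra hcon
  push_neg at hcon
  obtain ⟨ne1, ne2⟩ := hcon
  have hka : kapF j ≤ a := hab.trans_le inf_le_left
  have hkb : kapF j ≤ b := hab.trans_le inf_le_right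
  have hja : j ≤ a := by
    by_contra hja
    exact ne1 (le_antisymm hka (mem_le_kapF (h1.trans hka) hja))
  have hjb : j ≤ b := by
    by_contra hjb
    exact ne2 (le_antisymm hkb (mem_le_kapF (h1.trans hkb) hjb))
  exact h2 ((le_inf hja hjb).trans hab.ge)

lemma kapdF_joinIrred {m : α} (hJ : JoinSemidistrib α) (hm : MeetIrred m) :
    JoinIrred (kapdF m) := by
  obtain ⟨h1, h2⟩ := kapdF_spec hJ hm
  refine ⟨fun hbot => h2 (hbot.le.trans bot_le), fun a b hab => ?_⟩
  by_contra hcon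
  push_neg at hcon
  obtain ⟨ne1, ne2⟩ := hcon
  have hka : a ≤ kapdF m := le_sup_left.trans hab.ge
  have hkb : b ≤ kapdF m := le_sup_right.trans hab.ge
  have hja : a ≤ m := by
    by_contra hja
    exact ne1 (le_antisymm (kapdF_le_mem (hka.trans h1) hja) hka)
  have hjb : b ≤ m := by
    by_contra hjb
    exact ne2 (le_antisymm (kapdF_le_mem (hkb.trans h1) hjb) hkb)
  exact h2 (hab.trans_le (sup_le hja hjb))

lemma j_le_of_kap_lt {j x : α} (hM : MeetSemidistrib α) (hj : JoinIrred j)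
    (h : kapF j < x) : j ≤ x := by
  by_contra hjx
  exact absurd (mem_le_kapF ((kapF_spec hM hj).1.trans h.le) hjx) h.not_ge

lemma le_m_of_lt_kapd {m x : α} (hJ : JoinSemidistrib α) (hm : MeetIrred m)
    (h : x < kapdF m) : x ≤ m := by
  by_contra hjx
  exact absurd (kapdF_le_mem (h.le.trans (kapdF_spec hJ hm).1) hjx) h.not_ge

lemma j_le_of_le_kap_sup {j x : α} (hJ : JoinSemidistrib α) (hM : MeetSemidistrib α)
    (hj : JoinIrred j) (hx : x ≤ kapF j ⊔ j) (hnx : ¬ x ≤ kapF j) : j ≤ x := by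
  have h1 : kapF j < kapF j ⊔ x :=
    lt_of_le_of_ne le_sup_left (fun h => hnx (le_sup_right.trans h.symm.le))
  have h2 : j ≤ kapF j ⊔ x := j_le_of_kap_lt hM hj h1
  have h3 : kapF j ⊔ x = kapF j ⊔ j :=
    le_antisymm (sup_le le_sup_left hx) (sup_le le_sup_left h2)
  have h4 : kapF j ⊔ (x ⊓ j) = kapF j ⊔ x := hJ (kapF j) x j h3
  have h5 : ¬ x ⊓ j ≤ kapF j := by
    intro hle
    rw [sup_eq_left.mpr hle] at h4
    exact h1.ne h4
  have h6 : x ⊓ j = j := by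
    rcases (inf_le_right : x ⊓ j ≤ j).lt_or_eq with hlt | heq
    · exact absurd ((le_jstarF hlt).trans (kapF_spec hM hj).1) h5
    · exact heq
  rw [← h6]; exact inf_le_left

lemma m_le_of_kapd_inf_le {m x : α} (hJ : JoinSemidistrib α) (hM : MeetSemidistrib α)
    (hm : MeetIrred m) (hx : kapdF m ⊓ m ≤ x) (hnx : ¬ kapdF m ≤ x) : x ≤ m := by
  have h1 : kapdF m ⊓ x < kapdF m :=
    lt_of_le_of_ne inf_le_left (fun h => hnx (h.symm.le.trans inf_le_right))
  have h2 : kapdF m ⊓ x ≤ m := le_m_of_lt_kapd hJ hm h1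
  have h3 : kapdF m ⊓ x = kapdF m ⊓ m :=
    le_antisymm (le_inf inf_le_left h2) (le_inf inf_le_left hx)
  have h4 : kapdF m ⊓ (x ⊔ m) = kapdF m ⊓ x := hM (kapdF m) x m h3
  have h5 : ¬ kapdF m ≤ x ⊔ m := by
    intro hle
    rw [inf_eq_left.mpr hle] at h4
    exact h1.ne h4.symm
  have h6 : x ⊔ m = m := by
    rcases (le_sup_right : m ≤ x ⊔ m).lt_or_eq with hlt | heq
    · exact absurd ((kapdF_spec hJ hm).1.trans (mstarF_le hlt)) h5
    · exact heq.symm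
  rw [← h6]; exact le_sup_left

/-! ### kappa inverses -/

lemma kapd_kapF {j : α} (hJ : JoinSemidistrib α) (hM : MeetSemidistrib α)
    (hj : JoinIrred j) : kapdF (kapF j) = j := by
  have hm : MeetIrred (kapF j) := kapF_meetIrred hM hj
  have hmj : kapF j < kapF j ⊔ j :=
    lt_of_le_of_ne le_sup_left (fun h => (kapF_spec hM hj).2 (le_sup_right.trans h.symm.le))
  have hms_le : mstarF (kapF j) ≤ kapF j ⊔ j := mstarF_le hmj
  obtain ⟨hk1, hk2⟩ := kapdF_spec hJ hm
  have hjk : j ≤ kapdF (kapF j) :=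
    j_le_of_le_kap_sup hJ hM hj (hk1.trans hms_le) hk2
  have hkj : kapdF (kapF j) ≤ j :=
    kapdF_le_mem (j_le_of_kap_lt hM hj (lt_mstarF hm)) (kapF_spec hM hj).2
  exact le_antisymm hkj hjk

lemma kap_kapdF {m : α} (hJ : JoinSemidistrib α) (hM : MeetSemidistrib α)
    (hm : MeetIrred m) : kapF (kapdF m) = m := by
  have hj : JoinIrred (kapdF m) := kapdF_joinIrred hJ hm
  have hmj : kapdF m ⊓ m < kapdF m :=
    lt_of_le_of_ne inf_le_left (fun h => (kapdF_spec hJ hm).2 (h.symm.le.trans inf_le_right))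
  have hms_le : kapdF m ⊓ m ≤ jstarF (kapdF m) := le_jstarF hmj
  obtain ⟨hk1, hk2⟩ := kapF_spec hM hj
  have hjk : kapF (kapdF m) ≤ m :=
    m_le_of_kapd_inf_le hJ hM hm (hms_le.trans hk1) hk2
  have hkj : m ≤ kapF (kapdF m) :=
    mem_le_kapF (le_m_of_lt_kapd hJ hm (jstarF_lt hj)) (kapdF_spec hJ hm).2
  exact le_antisymm hjk hkj

/-! ### eta -/

lemma etaF_min {x y w : α} (h : x ⊔ y = w) : etaF y w ≤ x :=
  Finset.inf_le (Finset.mem_filter.mpr ⟨Finset.mem_univ _, h⟩)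

lemma thetaF_max {x z v : α} (h : x ⊓ z = v) : x ≤ thetaF z v :=
  Finset.le_sup (f := id) (Finset.mem_filter.mpr ⟨Finset.mem_univ _, h⟩)

lemma etaF_mem {y w : α} (hJ : JoinSemidistrib α) (hyw : y ≤ w) : etaF y w ⊔ y = w := by
  have hclosed : ∀ a ∈ {x : α | x ⊔ y = w}, ∀ b ∈ {x : α | x ⊔ y = w},
      a ⊓ b ∈ {x : α | x ⊔ y = w} := by
    intro a ha b hb
    have h2 : y ⊔ (a ⊓ b) = y ⊔ a := hJ y a b (by rw [sup_comm y a, sup_comm y b]; rw [ha, hb])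
    rw [Set.mem_setOf_eq, sup_comm, h2, sup_comm]
    exact ha
  have hne : (Finset.univ.filter (fun x : α => x ⊔ y = w)).Nonempty :=
    ⟨w, Finset.mem_filter.mpr ⟨Finset.mem_univ _, sup_eq_left.mpr hyw⟩⟩
  have : etaF y w ∈ {x : α | x ⊔ y = w} := by
    rw [etaF, ← Finset.inf'_eq_inf hne]
    exact Finset.inf'_mem _ hclosed _ hne id (fun a ha => (Finset.mem_filter.mp ha).2)
  exact this

lemma thetaF_mem {z v : α} (hM : MeetSemidistrib α) (hzv : v ≤ z) : thetaF z v ⊓ z = v := by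
  have hclosed : ∀ a ∈ {x : α | x ⊓ z = v}, ∀ b ∈ {x : α | x ⊓ z = v},
      a ⊔ b ∈ {x : α | x ⊓ z = v} := by
    intro a ha b hb
    have h2 : z ⊓ (a ⊔ b) = z ⊓ a := hM z a b (by rw [inf_comm z a, inf_comm z b]; rw [ha, hb])
    rw [Set.mem_setOf_eq, inf_comm, h2, inf_comm]
    exact ha
  have hne : (Finset.univ.filter (fun x : α => x ⊓ z = v)).Nonempty :=
    ⟨v, Finset.mem_filter.mpr ⟨Finset.mem_univ _, inf_eq_left.mpr hzv⟩⟩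
  have : thetaF z v ∈ {x : α | x ⊓ z = v} := by
    rw [thetaF, ← Finset.sup'_eq_sup hne]
    exact Finset.sup'_mem _ hclosed _ hne id (fun a ha => (Finset.mem_filter.mp ha).2)
  exact this

lemma etaF_le {y w : α} (hJ : JoinSemidistrib α) (hyw : y ≤ w) : etaF y w ≤ w :=
  le_sup_left.trans (etaF_mem hJ hyw).le

lemma thetaF_ge {z v : α} (hM : MeetSemidistrib α) (hzv : v ≤ z) : v ≤ thetaF z v :=
  (thetaF_mem hM hzv).ge.trans inf_le_left

lemma etaF_not_le {y w : α} (hJ : JoinSemidistrib α) (hyw : y < w) : ¬ etaF y w ≤ y := by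
  intro h
  have h2 := etaF_mem hJ hyw.le
  rw [sup_eq_right.mpr h] at h2
  exact hyw.ne h2

lemma thetaF_not_ge {z v : α} (hM : MeetSemidistrib α) (hzv : v < z) : ¬ z ≤ thetaF z v := by
  intro h
  have h2 := thetaF_mem hM hzv.le
  rw [inf_eq_right.mpr h] at h2
  exact hzv.ne h2.symm

lemma covby_cases {y w a : α} (hc : y ⋖ w) (ha : a ≤ w) : a ≤ y ∨ a ⊔ y = w := by
  rcases (le_sup_right : y ≤ a ⊔ y).lt_or_eq with hlt | heq
  · right
    rcases (sup_le ha hc.1.le : a ⊔ y ≤ w).lt_or_eq with h2 | h2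
    · exact absurd h2 (hc.2 hlt)
    · exact h2
  · left; exact le_sup_left.trans heq.symm.le

lemma covby_cases_d {v z a : α} (hc : v ⋖ z) (ha : v ≤ a) : z ≤ a ∨ a ⊓ z = v := by
  rcases (inf_le_right : a ⊓ z ≤ z).lt_or_eq with hlt | heq
  · right
    rcases (le_inf ha hc.1.le : v ≤ a ⊓ z).lt_or_eq with h2 | h2
    · exact absurd hlt (hc.2 h2)
    · exact h2.symm
  · left; exact heq.ge.trans inf_le_left

lemma lt_etaF_le {x y w : α} (hJ : JoinSemidistrib α) (hc : y ⋖ w) (hx : x < etaF y w) :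
    x ≤ y := by
  rcases covby_cases hc (hx.le.trans (etaF_le hJ hc.1.le)) with h | h
  · exact h
  · exact absurd (etaF_min h) hx.not_ge

lemma gt_thetaF_ge {x z v : α} (hM : MeetSemidistrib α) (hc : v ⋖ z) (hx : thetaF z v < x) :
    z ≤ x := by
  rcases covby_cases_d hc ((thetaF_ge hM hc.1.le).trans hx.le) with h | h
  · exact h
  · exact absurd (thetaF_max h) hx.not_ge

lemma etaF_joinIrred {y w : α} (hJ : JoinSemidistrib α) (hc : y ⋖ w) :
    JoinIrred (etaF y w) := by
  constructor
  · intro h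
    have h2 := etaF_mem hJ hc.1.le
    rw [h, bot_sup_eq] at h2
    exact hc.1.ne h2
  · intro a b heq
    have ha : a ≤ etaF y w := by rw [heq]; exact le_sup_left
    have hb : b ≤ etaF y w := by rw [heq]; exact le_sup_right
    by_cases h1 : a ⊔ y = w
    · exact Or.inl (le_antisymm (etaF_min h1) ha)
    · by_cases h2 : b ⊔ y = w
      · exact Or.inr (le_antisymm (etaF_min h2) hb)
      · exfalso
        have ha2 : a ≤ y := (covby_cases hc (ha.trans (etaF_le hJ hc.1.le))).resolve_right h1
        have hb2 : b ≤ y := (covby_cases hc (hb.trans (etaF_le hJ hc.1.le))).resolve_right h2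
        exact etaF_not_le hJ hc.1 (heq.trans_le (sup_le ha2 hb2))

lemma thetaF_meetIrred {z v : α} (hM : MeetSemidistrib α) (hc : v ⋖ z) :
    MeetIrred (thetaF z v) := by
  constructor
  · intro h
    have h2 := thetaF_mem hM hc.1.le
    rw [h, top_inf_eq] at h2
    exact hc.1.ne h2.symm
  · intro a b heq
    have ha : thetaF z v ≤ a := by rw [heq]; exact inf_le_left
    have hb : thetaF z v ≤ b := by rw [heq]; exact inf_le_right
    by_cases h1 : a ⊓ z = v
    · exact Or.inl (le_antisymm ha (thetaF_max h1))
    · by_cases h2 : b ⊓ z = v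
      · exact Or.inr (le_antisymm hb (thetaF_max h2))
      · exfalso
        have ha2 : z ≤ a := (covby_cases_d hc ((thetaF_ge hM hc.1.le).trans ha)).resolve_right h1
        have hb2 : z ≤ b := (covby_cases_d hc ((thetaF_ge hM hc.1.le).trans hb)).resolve_right h2
        exact thetaF_not_ge hM hc.1 ((le_inf ha2 hb2).trans heq.ge)

/-! ### CJset / CMset -/

lemma mem_CJsetF {x w : α} : x ∈ CJsetF w ↔ ∃ y, y ⋖ w ∧ etaF y w = x := by
  simp only [CJsetF, Finset.mem_image, Finset.mem_filter, Finset.mem_univ, true_and]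

lemma mem_CMsetF {x v : α} : x ∈ CMsetF v ↔ ∃ z, v ⋖ z ∧ thetaF z v = x := by
  simp only [CMsetF, Finset.mem_image, Finset.mem_filter, Finset.mem_univ, true_and]

lemma exists_covby_of_lt {x w : α} (h : x < w) : ∃ y, x ≤ y ∧ y ⋖ w := by
  have hfin : ({z : α | x ≤ z ∧ z < w}).Finite := Set.toFinite _
  obtain ⟨y, hy, hymax⟩ := Set.Finite.exists_maximalFor id _ hfin ⟨x, le_rfl, h⟩
  refine ⟨y, hy.1, hy.2, fun c hc1 hc2 => ?_⟩
  exact hc1.not_ge (hymax ⟨hy.1.trans hc1.le, hc2⟩ hc1.le)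

lemma exists_covby_of_gt {x v : α} (h : v < x) : ∃ z, z ≤ x ∧ v ⋖ z := by
  have hfin : ({z : α | z ≤ x ∧ v < z}).Finite := Set.toFinite _
  obtain ⟨z, hz, hzmin⟩ := Set.Finite.exists_minimalFor id _ hfin ⟨x, le_rfl, h⟩
  refine ⟨z, hz.1, hz.2, fun c hc1 hc2 => ?_⟩
  exact hc2.not_ge (hzmin ⟨hc2.le.trans hz.1, hc1⟩ hc2.le)

lemma CJsetF_sup {w : α} (hJ : JoinSemidistrib α) : (CJsetF w).sup id = w := by
  have hle : (CJsetF w).sup id ≤ w := by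
    refine Finset.sup_le fun a ha => ?_
    obtain ⟨y, hc, rfl⟩ := mem_CJsetF.mp ha
    exact etaF_le hJ hc.1.le
  rcases hle.lt_or_eq with hlt | heq
  · exfalso
    obtain ⟨y, hsy, hc⟩ := exists_covby_of_lt hlt
    have : etaF y w ≤ y :=
      (Finset.le_sup (f := id) (mem_CJsetF.mpr ⟨y, hc, rfl⟩)).trans hsy
    exact etaF_not_le hJ hc.1 this
  · exact heq

lemma CMsetF_inf {v : α} (hM : MeetSemidistrib α) : (CMsetF v).inf id = v := by
  have hle : v ≤ (CMsetF v).inf id := by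
    refine Finset.le_inf fun a ha => ?_
    obtain ⟨z, hc, rfl⟩ := mem_CMsetF.mp ha
    exact thetaF_ge hM hc.1.le
  rcases hle.lt_or_eq with hlt | heq
  · exfalso
    obtain ⟨z, hsz, hc⟩ := exists_covby_of_gt hlt
    have : z ≤ thetaF z v :=
      hsz.trans (Finset.inf_le (f := id) (mem_CMsetF.mpr ⟨z, hc, rfl⟩))
    exact thetaF_not_ge hM hc.1 this
  · exact heq.symm

lemma CJsetF_refines {w : α} (hJ : JoinSemidistrib α) {B : Finset α} (hB : B.sup id = w) :
    JoinRefines (CJsetF w) B := by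
  intro a ha
  obtain ⟨y, hc, rfl⟩ := mem_CJsetF.mp ha
  have hex : ∃ b ∈ B, ¬ b ≤ y := by
    by_contra hcon
    push_neg at hcon
    exact absurd (hB ▸ Finset.sup_le hcon : w ≤ y) hc.1.not_ge
  obtain ⟨b, hbB, hby⟩ := hex
  have hbw : b ≤ w := hB ▸ Finset.le_sup (f := id) hbB
  rcases covby_cases hc hbw with h | h
  · exact absurd h hby
  · exact ⟨b, hbB, etaF_min h⟩

lemma CMsetF_refines {v : α} (hM : MeetSemidistrib α) {B : Finset α} (hB : B.inf id = v) :
    MeetRefines (CMsetF v) B := by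
  intro a ha
  obtain ⟨z, hc, rfl⟩ := mem_CMsetF.mp ha
  have hex : ∃ b ∈ B, ¬ z ≤ b := by
    by_contra hcon
    push_neg at hcon
    exact absurd (hB ▸ Finset.le_inf hcon : z ≤ v) hc.1.not_ge
  obtain ⟨b, hbB, hby⟩ := hex
  have hbv : v ≤ b := hB ▸ Finset.inf_le (f := id) hbB
  rcases covby_cases_d hc hbv with h | h
  · exact absurd h hby
  · exact ⟨b, hbB, thetaF_max h⟩

lemma etaF_le_cover {y y' w : α} (hJ : JoinSemidistrib α) (hy : y ⋖ w) (hy' : y' ⋖ w)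
    (hne : y ≠ y') : etaF y w ≤ y' := by
  rcases covby_cases hy (hy'.1.le) with h | h
  · rcases h.lt_or_eq with hlt | heq
    · exact absurd hy.1 (hy'.2 hlt)
    · exact absurd heq.symm hne
  · exact etaF_min h

lemma thetaF_ge_cover {z z' v : α} (hM : MeetSemidistrib α) (hz : v ⋖ z) (hz' : v ⋖ z')
    (hne : z ≠ z') : z' ≤ thetaF z v := by
  rcases covby_cases_d hz (hz'.1.le) with h | h
  · rcases h.lt_or_eq with hlt | heq
    · exact absurd hlt (hz'.2 hz.1)
    · exact absurd heq hne
  · exact thetaF_max h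

lemma CJsetF_irred {w : α} (hJ : JoinSemidistrib α) : IrredJoinRep (CJsetF w) w := by
  refine ⟨CJsetF_sup hJ, fun A' hsub => ?_⟩
  obtain ⟨e0, he0mem, he0not⟩ := Finset.exists_of_ssubset hsub
  obtain ⟨y0, hc0, he0⟩ := mem_CJsetF.mp he0mem
  have hA' : ∀ a ∈ A', a ≤ y0 := by
    intro a haA'
    obtain ⟨y', hc', hea⟩ := mem_CJsetF.mp (hsub.1 haA')
    by_cases hyy : y' = y0
    · exact absurd (by rw [← he0, ← hyy, hea]; exact haA') he0not
    · rw [← hea]; exact etaF_le_cover hJ hc' hc0 hyy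
  exact lt_of_le_of_lt (Finset.sup_le hA') hc0.1

lemma CMsetF_irred {v : α} (hM : MeetSemidistrib α) : IrredMeetRep (CMsetF v) v := by
  refine ⟨CMsetF_inf hM, fun A' hsub => ?_⟩
  obtain ⟨e0, he0mem, he0not⟩ := Finset.exists_of_ssubset hsub
  obtain ⟨z0, hc0, he0⟩ := mem_CMsetF.mp he0mem
  have hA' : ∀ a ∈ A', z0 ≤ a := by
    intro a haA'
    obtain ⟨z', hc', hea⟩ := mem_CMsetF.mp (hsub.1 haA')
    by_cases hzz : z' = z0
    · exact absurd (by rw [← he0, ← hzz, hea]; exact haA') he0not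
    · rw [← hea]; exact thetaF_ge_cover hM hc' hc0 hzz
  exact lt_of_lt_of_le hc0.1 (Finset.le_inf hA')

lemma CJsetF_canonical {w : α} (hJ : JoinSemidistrib α) : CanonicalJoinRep (CJsetF w) w :=
  ⟨CJsetF_irred hJ, fun B hB => CJsetF_refines hJ hB.1⟩

lemma CMsetF_canonical {v : α} (hM : MeetSemidistrib α) : CanonicalMeetRep (CMsetF v) v :=
  ⟨CMsetF_irred hM, fun B hB => CMsetF_refines hM hB.1⟩

lemma canonical_antichain {A : Finset α} {w : α} (h : CanonicalJoinRep A w) :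
    ∀ a ∈ A, ∀ b ∈ A, a ≤ b → a = b := by
  intro a ha b hb hab
  by_contra hne
  have hbe : b ∈ A.erase a := Finset.mem_erase.mpr ⟨fun he => hne he.symm, hb⟩
  have hsup : (A.erase a).sup id = w := by
    refine le_antisymm ?_ ?_
    · rw [← h.1.1]
      exact Finset.sup_le fun x hx => Finset.le_sup (f := id) (Finset.mem_of_mem_erase hx)
    · rw [← h.1.1]
      refine Finset.sup_le fun x hx => ?_
      by_cases hxa : x = a
      · exact hxa ▸ hab.trans (Finset.le_sup (f := id) hbe)
      · exact Finset.le_sup (f := id) (Finset.mem_erase.mpr ⟨hxa, hx⟩)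
  exact absurd hsup (h.1.2 (A.erase a) (Finset.erase_ssubset ha)).ne

lemma canonical_antichain_m {A : Finset α} {v : α} (h : CanonicalMeetRep A v) :
    ∀ a ∈ A, ∀ b ∈ A, b ≤ a → a = b := by
  intro a ha b hb hab
  by_contra hne
  have hbe : b ∈ A.erase a := Finset.mem_erase.mpr ⟨fun he => hne he.symm, hb⟩
  have hinf : (A.erase a).inf id = v := by
    refine le_antisymm ?_ ?_
    · rw [← h.1.1]
      refine Finset.le_inf fun x hx => ?_
      by_cases hxa : x = a
      · exact hxa ▸ (Finset.inf_le (f := id) hbe).trans hab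
      · exact Finset.inf_le (f := id) (Finset.mem_erase.mpr ⟨hxa, hx⟩)
    · rw [← h.1.1]
      exact Finset.le_inf fun x hx => Finset.inf_le (f := id) (Finset.mem_of_mem_erase hx)
  exact absurd hinf (h.1.2 (A.erase a) (Finset.erase_ssubset ha)).ne'

lemma joinsCanonically_iff (hJ : JoinSemidistrib α) (F : Finset α) :
    JoinsCanonically F ↔ F = CJsetF (F.sup id) := by
  constructor
  · intro h
    have hA := CJsetF_canonical (w := F.sup id) hJ
    have r1 : JoinRefines F (CJsetF (F.sup id)) := h.2 _ (CJsetF_irred hJ)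
    have r2 : JoinRefines (CJsetF (F.sup id)) F := hA.2 F h.1
    apply Finset.ext
    intro x
    constructor
    · intro hx
      obtain ⟨a, haA, hxa⟩ := r1 x hx
      obtain ⟨x', hx'F, hax'⟩ := r2 a haA
      have hxx' : x = x' := canonical_antichain h x hx x' hx'F (hxa.trans hax')
      have hax : a = x := le_antisymm (hax'.trans hxx'.ge) hxa
      exact hax ▸ haA
    · intro hx
      obtain ⟨a, haF, hxa⟩ := r2 x hx
      obtain ⟨x', hx'A, hax'⟩ := r1 a haF
      have hxx' : x = x' := canonical_antichain hA x hx x' hx'A (hxa.trans hax')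
      have hax : a = x := le_antisymm (hax'.trans hxx'.ge) hxa
      exact hax ▸ haF
  · intro h
    show CanonicalJoinRep F (F.sup id)
    rw [h, CJsetF_sup hJ]
    exact CJsetF_canonical hJ

lemma meetsCanonically_iff (hM : MeetSemidistrib α) (G : Finset α) :
    MeetsCanonically G ↔ G = CMsetF (G.inf id) := by
  constructor
  · intro h
    have hA := CMsetF_canonical (v := G.inf id) hM
    have r1 : MeetRefines G (CMsetF (G.inf id)) := h.2 _ (CMsetF_irred hM)
    have r2 : MeetRefines (CMsetF (G.inf id)) G := hA.2 G h.1
    apply Finset.ext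
    intro x
    constructor
    · intro hx
      obtain ⟨a, haA, hxa⟩ := r1 x hx
      obtain ⟨x', hx'F, hax'⟩ := r2 a haA
      have hxx' : x = x' := canonical_antichain_m h x hx x' hx'F (hax'.trans hxa)
      have hax : a = x := le_antisymm hxa (hxx'.le.trans hax')
      exact hax ▸ haA
    · intro hx
      obtain ⟨a, haF, hxa⟩ := r2 x hx
      obtain ⟨x', hx'A, hax'⟩ := r1 a haF
      have hxx' : x = x' := canonical_antichain_m hA x hx x' hx'A (hax'.trans hxa)
      have hax : a = x := le_antisymm hxa (hxx'.le.trans hax')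
      exact hax ▸ haF
  · intro h
    show CanonicalMeetRep G (G.inf id)
    rw [h, CMsetF_inf hM]
    exact CMsetF_canonical hM

/-! ### Main forward -/

lemma main_fwd (hJ : JoinSemidistrib α) (hM : MeetSemidistrib α) (F : Finset α)
    (hirr : ∀ j ∈ F, JoinIrred j) (hF : JoinsCanonically F) :
    MeetsCanonically (F.image kapF) := by
  set w := F.sup id with hw
  have hFC : F = CJsetF w := (joinsCanonically_iff hJ F).mp hF
  set G := F.image kapF with hGdef
  set v : α := G.inf id with hvdef
  have hjmem : ∀ j ∈ F, ∃ y, y ⋖ w ∧ etaF y w = j := fun j hj => mem_CJsetF.mp (hFC ▸ hj)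
  have p1 : ∀ j ∈ F, ∀ j' ∈ F, j ≠ j' → j ≤ kapF j' := by
    intro j hj j' hj' hne
    obtain ⟨y, hy, hej⟩ := hjmem j hj
    obtain ⟨y', hy', hej'⟩ := hjmem j' hj'
    have hyy : y ≠ y' := fun h => hne (by rw [← hej, ← hej', h])
    have h1 : j ≤ y' := hej.symm.trans_le (etaF_le_cover hJ hy hy' hyy)
    have h2 : y' ≤ kapF j' := by
      refine mem_le_kapF ?_ ?_
      · exact lt_etaF_le hJ hy' ((jstarF_lt (hirr j' hj')).trans_le hej'.ge)
      · rw [← hej']; exact etaF_not_le hJ hy'.1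
    exact h1.trans h2
  have hjstarv : ∀ j ∈ F, jstarF j ≤ v := by
    intro j hj
    rw [hvdef]
    refine Finset.le_inf fun m hm => ?_
    obtain ⟨j', hj', rfl⟩ := Finset.mem_image.mp hm
    by_cases h : j = j'
    · exact h ▸ (kapF_spec hM (hirr j hj)).1
    · exact (jstarF_lt (hirr j hj)).le.trans (p1 j hj j' hj' h)
  have hvle : ∀ j ∈ F, v ≤ kapF j := fun j hj =>
    Finset.inf_le (f := id) (Finset.mem_image_of_mem _ hj)
  have hjnv : ∀ j ∈ F, ¬ j ≤ v := fun j hj hle =>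
    (kapF_spec hM (hirr j hj)).2 (hle.trans (hvle j hj))
  have p4 : ∀ j ∈ F, (v ⊔ j) ⊓ kapF j = v := by
    intro j hj
    refine le_antisymm ?_ (le_inf le_sup_left (hvle j hj))
    rw [hvdef]
    refine Finset.le_inf fun m hm => ?_
    obtain ⟨j', hj', rfl⟩ := Finset.mem_image.mp hm
    by_cases h : j = j'
    · exact h ▸ inf_le_right
    · exact inf_le_left.trans (sup_le (hvle j' hj') (p1 j hj j' hj' h))
  have p5 : ∀ j ∈ F, v ⋖ (v ⊔ j) := by
    intro j hj
    have hlt : v < v ⊔ j :=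
      lt_of_le_of_ne le_sup_left (fun h => hjnv j hj (le_sup_right.trans h.symm.le))
    refine ⟨hlt, fun c hc1 hc2 => ?_⟩
    have hcm : ¬ c ≤ kapF j := by
      intro hle
      exact hc1.not_ge (le_inf hc2.le hle |>.trans (p4 j hj).le)
    have hcj : j ≤ c :=
      j_le_of_le_kap_sup hJ hM (hirr j hj)
        (hc2.le.trans (sup_le_sup_right (hvle j hj) j)) hcm
    exact hc2.not_ge (sup_le hc1.le hcj)
  have p6 : ∀ j ∈ F, thetaF (v ⊔ j) v = kapF j := by
    intro j hj
    have hvθ : v ≤ thetaF (v ⊔ j) v := thetaF_ge hM le_sup_left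
    have hθmem : thetaF (v ⊔ j) v ⊓ (v ⊔ j) = v := thetaF_mem hM le_sup_left
    have h1 : thetaF (v ⊔ j) v ≤ kapF j := by
      refine mem_le_kapF ((hjstarv j hj).trans hvθ) ?_
      intro hjθ
      have hsle : v ⊔ j ≤ thetaF (v ⊔ j) v := sup_le hvθ hjθ
      rw [inf_eq_right.mpr hsle] at hθmem
      exact hjnv j hj (le_sup_right.trans hθmem.le)
    have h2 : kapF j ≤ thetaF (v ⊔ j) v := by
      refine thetaF_max ?_
      rw [inf_comm]
      exact p4 j hj
    exact le_antisymm h1 h2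
  have hGsub : ∀ m ∈ G, m ∈ CMsetF v := by
    intro m hm
    obtain ⟨j, hj, rfl⟩ := Finset.mem_image.mp hm
    exact mem_CMsetF.mpr ⟨v ⊔ j, p5 j hj, p6 j hj⟩
  have hCsub : ∀ x ∈ CMsetF v, x ∈ G := by
    intro θ hθ
    obtain ⟨m, hmG, hmθ⟩ := CMsetF_refines hM (B := G) hvdef.symm θ hθ
    have hmC : m ∈ CMsetF v := hGsub m hmG
    have hθm : θ = m := canonical_antichain_m (CMsetF_canonical hM) θ hθ m hmC hmθ
    exact hθm ▸ hmG
  have hGC : G = CMsetF v := Finset.Subset.antisymm hGsub hCsub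
  rw [meetsCanonically_iff hM G, ← hvdef]
  exact hGC

/-! ### Main backward -/

lemma main_bwd (hJ : JoinSemidistrib α) (hM : MeetSemidistrib α) (G : Finset α)
    (hirr : ∀ m ∈ G, MeetIrred m) (hG : MeetsCanonically G) :
    JoinsCanonically (G.image kapdF) := by
  set v := G.inf id with hv
  have hGC : G = CMsetF v := (meetsCanonically_iff hM G).mp hG
  set F := G.image kapdF with hFdef
  set w : α := F.sup id with hwdef
  have hmmem : ∀ m ∈ G, ∃ z, v ⋖ z ∧ thetaF z v = m := fun m hm => mem_CMsetF.mp (hGC ▸ hm)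
  have p1 : ∀ m ∈ G, ∀ m' ∈ G, m ≠ m' → kapdF m' ≤ m := by
    intro m hm m' hm' hne
    obtain ⟨z, hz, hem⟩ := hmmem m hm
    obtain ⟨z', hz', hem'⟩ := hmmem m' hm'
    have hzz : z ≠ z' := fun h => hne (by rw [← hem, ← hem', h])
    have h1 : z' ≤ m := (thetaF_ge_cover hM hz hz' hzz).trans hem.le
    have h2 : kapdF m' ≤ z' := by
      refine kapdF_le_mem ?_ ?_
      · exact gt_thetaF_ge hM hz' (hem'.le.trans_lt (lt_mstarF (hirr m' hm')))
      · rw [← hem']; exact thetaF_not_ge hM hz'.1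
    exact h2.trans h1
  have hmstarw : ∀ m ∈ G, w ≤ mstarF m := by
    intro m hm
    rw [hwdef]
    refine Finset.sup_le fun j hj => ?_
    obtain ⟨m', hm', rfl⟩ := Finset.mem_image.mp hj
    by_cases h : m = m'
    · exact h ▸ (kapdF_spec hJ (hirr m hm)).1
    · exact (p1 m hm m' hm' h).trans (lt_mstarF (hirr m hm)).le
  have hwle : ∀ m ∈ G, kapdF m ≤ w := fun m hm =>
    Finset.le_sup (f := id) (Finset.mem_image_of_mem _ hm)
  have hnwm : ∀ m ∈ G, ¬ w ≤ m := fun m hm hle =>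
    (kapdF_spec hJ (hirr m hm)).2 ((hwle m hm).trans hle)
  have p4 : ∀ m ∈ G, (w ⊓ m) ⊔ kapdF m = w := by
    intro m hm
    refine le_antisymm (sup_le inf_le_left (hwle m hm)) ?_
    rw [hwdef]
    refine Finset.sup_le fun j hj => ?_
    obtain ⟨m', hm', rfl⟩ := Finset.mem_image.mp hj
    by_cases h : m = m'
    · exact h ▸ le_sup_right
    · exact (le_inf (hwle m' hm') (p1 m hm m' hm' h)).trans le_sup_left
  have p5 : ∀ m ∈ G, (w ⊓ m) ⋖ w := by
    intro m hm
    have hlt : w ⊓ m < w :=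
      lt_of_le_of_ne inf_le_left (fun h => hnwm m hm (h.symm.le.trans inf_le_right))
    refine ⟨hlt, fun c hc1 hc2 => ?_⟩
    have hcm : ¬ kapdF m ≤ c := by
      intro hle
      exact hc2.not_ge ((p4 m hm).ge.trans (sup_le hc1.le hle))
    have hcj : c ≤ m :=
      m_le_of_kapd_inf_le hJ hM (hirr m hm)
        ((inf_le_inf_right m (hwle m hm)).trans hc1.le) hcm
    exact hc1.not_ge (le_inf hc2.le hcj)
  have p6 : ∀ m ∈ G, etaF (w ⊓ m) w = kapdF m := by
    intro m hm
    have hθw : etaF (w ⊓ m) w ≤ w := etaF_le hJ inf_le_left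
    have hθmem : etaF (w ⊓ m) w ⊔ (w ⊓ m) = w := etaF_mem hJ inf_le_left
    have h1 : kapdF m ≤ etaF (w ⊓ m) w := by
      refine kapdF_le_mem (hθw.trans (hmstarw m hm)) ?_
      intro hθm
      have hsle : etaF (w ⊓ m) w ≤ w ⊓ m := le_inf hθw hθm
      rw [sup_eq_right.mpr hsle] at hθmem
      exact hnwm m hm (hθmem.ge.trans inf_le_right)
    have h2 : etaF (w ⊓ m) w ≤ kapdF m := by
      refine etaF_min ?_
      rw [sup_comm]
      exact p4 m hm
    exact le_antisymm h2 h1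
  have hFsub : ∀ j ∈ F, j ∈ CJsetF w := by
    intro j hj
    obtain ⟨m, hm, rfl⟩ := Finset.mem_image.mp hj
    exact mem_CJsetF.mpr ⟨w ⊓ m, p5 m hm, p6 m hm⟩
  have hCsub : ∀ x ∈ CJsetF w, x ∈ F := by
    intro η hη
    obtain ⟨j, hjF, hjη⟩ := CJsetF_refines hJ (B := F) hwdef.symm η hη
    have hjC : j ∈ CJsetF w := hFsub j hjF
    have hηj : η = j := canonical_antichain (CJsetF_canonical hJ) η hη j hjC hjη
    exact hηj ▸ hjF
  have hFC2 : F = CJsetF w := Finset.Subset.antisymm hFsub hCsub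
  rw [joinsCanonically_iff hJ F, ← hwdef]
  exact hFC2

end SDProof

/-- Corollary (iso): in a finite semidistributive lattice, κ is a bijection from
join-irreducibles to meet-irreducibles inducing an isomorphism from the canonical join
complex to the canonical meet complex. -/
theorem stmt_4 {α : Type*} [Lattice α] [BoundedOrder α] [Fintype α] [DecidableEq α]
    (hsd : JoinSemidistrib α ∧ MeetSemidistrib α) :
    ∃ κ : α → α,
      (∀ j jstar : α, JoinIrred j → jstar ⋖ j →
        IsGreatest {a : α | jstar ≤ a ∧ ¬ j ≤ a} (κ j)) ∧
      Set.BijOn κ {j : α | JoinIrred j} {m : α | MeetIrred m} ∧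
      ∀ F : Finset α, (∀ j ∈ F, JoinIrred j) →
        (JoinsCanonically F ↔ MeetsCanonically (F.image κ)) := by
  obtain ⟨hJ, hM⟩ := hsd
  refine ⟨SDProof.kapF, ?_, ⟨?_, ?_, ?_⟩, ?_⟩
  · intro j jstar hj hcov
    rw [SDProof.covby_jstarF hj hcov]
    exact SDProof.kapF_isGreatest hM hj
  · intro j hj
    exact SDProof.kapF_meetIrred hM hj
  · intro a ha b hb heq
    have h1 := SDProof.kapd_kapF hJ hM ha
    have h2 := SDProof.kapd_kapF hJ hM hb
    rw [← h1, ← h2, heq]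
  · intro m hm
    exact ⟨SDProof.kapdF m, SDProof.kapdF_joinIrred hJ hm, SDProof.kap_kapdF hJ hM hm⟩
  · intro F hirr
    constructor
    · exact SDProof.main_fwd hJ hM F hirr
    · intro h
      have hirr' : ∀ m ∈ F.image SDProof.kapF, MeetIrred m := by
        intro m hm
        obtain ⟨j, hj, rfl⟩ := Finset.mem_image.mp hm
        exact SDProof.kapF_meetIrred hM (hirr j hj)
      have hmain := SDProof.main_bwd hJ hM _ hirr' h
      have himg : (F.image SDProof.kapF).image SDProof.kapdF = F := by
        have hcg : F.image (SDProof.kapdF ∘ SDProof.kapF) = F.image id :=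
          Finset.image_congr (fun x hx => SDProof.kapd_kapF hJ hM (hirr x hx))
        rw [Finset.image_image, hcg, Finset.image_id]
      rwa [himg] at hmain
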